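/- Let n ≥ 1 and let A_1, A_2, A_3 be pairwise distinct nonempty subsets of {1,...,n}. For each subset A let α_A = Σ_{i∈A} x_i be the corresponding 0/1 linear form on Q^n and H_A = ker α_A. Then the subspace H_{A_1} ∩ H_{A_2} ∩ H_{A_3} has codimension 2 in Q^n if and only if there is a permutation (i_1,i_2,i_3) of (1,2,3) with A_{i_1} and A_{i_2} disjoint and A_{i_1} ∪ A_{i_2} = A_{i_3}. -/

import Mathlib

/-- The 0/1 linear form `α_A = Σ_{i ∈ A} x_i` on `ℚ^n`. -/
noncomputable def alphaForm (n : ℕ) (A : Finset (Fin n)) : (Fin n → ℚ) →ₗ[ℚ] ℚ :=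
  ∑ i ∈ A, LinearMap.proj i

lemma alphaForm_apply (n : ℕ) (A : Finset (Fin n)) (v : Fin n → ℚ) :
    alphaForm n A v = ∑ i ∈ A, v i := by
  simp [alphaForm]

lemma alphaForm_single (n : ℕ) (A : Finset (Fin n)) (i : Fin n) :
    alphaForm n A (Pi.single i 1) = if i ∈ A then 1 else 0 := by
  rw [alphaForm_apply]
  simp [Pi.single_apply, Finset.sum_ite_eq' A i (fun _ => (1:ℚ))]

lemma alphaForm_union (n : ℕ) {A B : Finset (Fin n)} (h : Disjoint A B) :
    alphaForm n (A ∪ B) = alphaForm n A + alphaForm n B := by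
  unfold alphaForm
  rw [Finset.sum_union h]

/-- rank-nullity consequence: kernels of the forms of two disjoint nonempty sets. -/
lemma finrank_ker_inf_two (n : ℕ) (A B : Finset (Fin n)) (hA : A.Nonempty) (hB : B.Nonempty)
    (hd : Disjoint A B) :
    Module.finrank ℚ ↥(LinearMap.ker (alphaForm n A) ⊓ LinearMap.ker (alphaForm n B)) = n - 2 := by
  obtain ⟨a, ha⟩ := hA
  obtain ⟨b, hb⟩ := hB
  have hab : a ∉ B := fun h => (Finset.disjoint_left.mp hd ha) h
  have hba : b ∉ A := fun h => (Finset.disjoint_left.mp hd h) hb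
  set L := (alphaForm n A).prod (alphaForm n B) with hL
  have hker : LinearMap.ker L = LinearMap.ker (alphaForm n A) ⊓ LinearMap.ker (alphaForm n B) :=
    LinearMap.ker_prod _ _
  have hrange : LinearMap.range L = ⊤ := by
    rw [Submodule.eq_top_iff']
    rintro ⟨u, v⟩
    refine ⟨u • (Pi.single a 1 : Fin n → ℚ) + v • (Pi.single b 1 : Fin n → ℚ), ?_⟩
    simp [hL, LinearMap.prod_apply, map_add, map_smul, alphaForm_single, ha, hb, hab, hba]
  have hrn := LinearMap.finrank_range_add_finrank_ker L
  rw [hrange, hker, finrank_top] at hrn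
  have h2 : Module.finrank ℚ (ℚ × ℚ) = 2 := by
    simp [Module.finrank_prod]
  have hn : Module.finrank ℚ (Fin n → ℚ) = n := by
    simp [Module.finrank_pi]
  rw [h2, hn] at hrn
  omega

lemma exists_mem_not_mem {n : ℕ} {A B : Finset (Fin n)} (h : A ≠ B) :
    ∃ i, (i ∈ A ∧ i ∉ B) ∨ (i ∈ B ∧ i ∉ A) := by
  by_contra hco
  push_neg at hco
  exact h (Finset.ext fun j => ⟨fun hj => (hco j).1 hj, fun hj => (hco j).2 hj⟩)

lemma of_indicator_sum {n : ℕ} (A B C : Finset (Fin n))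
    (h : ∀ i, ((if i ∈ A then (1:ℚ) else 0) + (if i ∈ B then 1 else 0)
      = (if i ∈ C then 1 else 0))) :
    Disjoint A B ∧ A ∪ B = C := by
  constructor
  · rw [Finset.disjoint_left]
    intro i hiA hiB
    have hi := h i
    by_cases hC : i ∈ C <;> simp [hiA, hiB, hC] at hi <;> norm_num at hi
  · ext i
    have hi := h i
    simp only [Finset.mem_union]
    by_cases hA : i ∈ A <;> by_cases hB : i ∈ B <;> by_cases hC : i ∈ C <;> simp_all

lemma aux_two {n : ℕ} {A B : Finset (Fin n)} (hA : A.Nonempty) (hB : B.Nonempty) (hAB : A ≠ B)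
    (b c : ℚ)
    (key : ∀ i, b * (if i ∈ A then (1:ℚ) else 0) + c * (if i ∈ B then 1 else 0) = 0) :
    b = 0 ∧ c = 0 := by
  obtain ⟨i, ⟨hiA, hiB⟩ | ⟨hiB, hiA⟩⟩ := exists_mem_not_mem hAB
  · have hb : b = 0 := by have := key i; simp [hiA, hiB] at this; linarith
    obtain ⟨j, hj⟩ := hB
    have hc : c = 0 := by have := key j; simp [hj, hb] at this; linarith
    exact ⟨hb, hc⟩
  · have hc : c = 0 := by have := key i; simp [hiA, hiB] at this; linarith
    obtain ⟨j, hj⟩ := hA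
    have hb : b = 0 := by have := key j; simp [hj, hc] at this; linarith
    exact ⟨hb, hc⟩

/-- The combinatorial core: a nontrivial linear dependence between the three indicator
vectors forces one set to be the disjoint union of the other two. -/
lemma combo {n : ℕ} (A₁ A₂ A₃ : Finset (Fin n))
    (h1 : A₁.Nonempty) (h2 : A₂.Nonempty) (h3 : A₃.Nonempty)
    (h12 : A₁ ≠ A₂) (h13 : A₁ ≠ A₃) (h23 : A₂ ≠ A₃)
    (c₁ c₂ c₃ : ℚ) (hc : ¬(c₁ = 0 ∧ c₂ = 0 ∧ c₃ = 0))
    (key : ∀ i, c₁ * (if i ∈ A₁ then (1:ℚ) else 0) + c₂ * (if i ∈ A₂ then 1 else 0)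
      + c₃ * (if i ∈ A₃ then 1 else 0) = 0) :
    (Disjoint A₁ A₂ ∧ A₁ ∪ A₂ = A₃) ∨
      (Disjoint A₁ A₃ ∧ A₁ ∪ A₃ = A₂) ∨
      (Disjoint A₂ A₃ ∧ A₂ ∪ A₃ = A₁) := by
  -- all coefficients are nonzero
  have hc1 : c₁ ≠ 0 := by
    intro h0
    have := aux_two h2 h3 h23 c₂ c₃ (fun i => by have := key i; rw [h0] at this; linarith)
    exact hc ⟨h0, this.1, this.2⟩
  have hc2 : c₂ ≠ 0 := by
    intro h0
    have := aux_two h1 h3 h13 c₁ c₃ (fun i => by have := key i; rw [h0] at this; linarith)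
    exact hc ⟨this.1, h0, this.2⟩
  have hc3 : c₃ ≠ 0 := by
    intro h0
    have := aux_two h1 h2 h12 c₁ c₂ (fun i => by have := key i; rw [h0] at this; linarith)
    exact hc ⟨this.1, this.2, h0⟩
  -- disjunctions coming from distinctness witnesses
  have d12 : c₁ + c₃ = 0 ∨ c₂ + c₃ = 0 := by
    obtain ⟨i, ⟨hA, hB⟩ | ⟨hB, hA⟩⟩ := exists_mem_not_mem h12
    · by_cases h3' : i ∈ A₃
      · left; have := key i; simp [hA, hB, h3'] at this; linarith
      · exfalso; have := key i; simp [hA, hB, h3'] at this; exact hc1 (by linarith)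
    · by_cases h3' : i ∈ A₃
      · right; have := key i; simp [hA, hB, h3'] at this; linarith
      · exfalso; have := key i; simp [hA, hB, h3'] at this; exact hc2 (by linarith)
  have d13 : c₁ + c₂ = 0 ∨ c₃ + c₂ = 0 := by
    obtain ⟨i, ⟨hA, hB⟩ | ⟨hB, hA⟩⟩ := exists_mem_not_mem h13
    · by_cases h2' : i ∈ A₂
      · left; have := key i; simp [hA, hB, h2'] at this; linarith
      · exfalso; have := key i; simp [hA, hB, h2'] at this; exact hc1 (by linarith)
    · by_cases h2' : i ∈ A₂
      · right; have := key i; simp [hA, hB, h2'] at this; linarith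
      · exfalso; have := key i; simp [hA, hB, h2'] at this; exact hc3 (by linarith)
  have d23 : c₂ + c₁ = 0 ∨ c₃ + c₁ = 0 := by
    obtain ⟨i, ⟨hA, hB⟩ | ⟨hB, hA⟩⟩ := exists_mem_not_mem h23
    · by_cases h1' : i ∈ A₁
      · left; have := key i; simp [hA, hB, h1'] at this; linarith
      · exfalso; have := key i; simp [hA, hB, h1'] at this; exact hc2 (by linarith)
    · by_cases h1' : i ∈ A₁
      · right; have := key i; simp [hA, hB, h1'] at this; linarith
      · exfalso; have := key i; simp [hA, hB, h1'] at this; exact hc3 (by linarith)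
  -- the three possible outcomes
  have case23 : c₁ + c₂ = 0 → c₁ + c₃ = 0 → (Disjoint A₂ A₃ ∧ A₂ ∪ A₃ = A₁) := by
    intro e1 e2
    apply of_indicator_sum
    intro i
    have h0 : c₁ * ((if i ∈ A₂ then (1:ℚ) else 0) + (if i ∈ A₃ then 1 else 0)
        - (if i ∈ A₁ then 1 else 0)) = 0 := by
      linear_combination (-1 : ℚ) * key i + (if i ∈ A₂ then (1:ℚ) else 0) * e1
        + (if i ∈ A₃ then (1:ℚ) else 0) * e2
    have := (mul_eq_zero.mp h0).resolve_left hc1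
    linarith
  have case13 : c₁ + c₂ = 0 → c₂ + c₃ = 0 → (Disjoint A₁ A₃ ∧ A₁ ∪ A₃ = A₂) := by
    intro e1 e2
    apply of_indicator_sum
    intro i
    have h0 : c₂ * ((if i ∈ A₁ then (1:ℚ) else 0) + (if i ∈ A₃ then 1 else 0)
        - (if i ∈ A₂ then 1 else 0)) = 0 := by
      linear_combination (-1 : ℚ) * key i + (if i ∈ A₁ then (1:ℚ) else 0) * e1
        + (if i ∈ A₃ then (1:ℚ) else 0) * e2
    have := (mul_eq_zero.mp h0).resolve_left hc2
    linarith
  have case12 : c₁ + c₃ = 0 → c₂ + c₃ = 0 → (Disjoint A₁ A₂ ∧ A₁ ∪ A₂ = A₃) := by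
    intro e1 e2
    apply of_indicator_sum
    intro i
    have h0 : c₃ * ((if i ∈ A₁ then (1:ℚ) else 0) + (if i ∈ A₂ then 1 else 0)
        - (if i ∈ A₃ then 1 else 0)) = 0 := by
      linear_combination (-1 : ℚ) * key i + (if i ∈ A₁ then (1:ℚ) else 0) * e1
        + (if i ∈ A₂ then (1:ℚ) else 0) * e2
    have := (mul_eq_zero.mp h0).resolve_left hc3
    linarith
  rcases d12 with e13 | e23 <;> rcases d13 with e12 | e23' <;> rcases d23 with e12' | e13'
  · exact Or.inr (Or.inr (case23 e12 e13))
  · exact Or.inr (Or.inr (case23 e12 e13))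
  · exact absurd (show c₃ = 0 by linarith) hc3
  · exact Or.inl (case12 e13 (by linarith))
  · exact Or.inr (Or.inl (case13 (by linarith) e23))
  · exact absurd (show c₂ = 0 by linarith) hc2
  · exact Or.inr (Or.inl (case13 (by linarith) e23))
  · exact Or.inl (case12 (by linarith) e23)

theorem stmt0 (n : ℕ) (hn : 1 ≤ n) (A₁ A₂ A₃ : Finset (Fin n))
    (h1 : A₁.Nonempty) (h2 : A₂.Nonempty) (h3 : A₃.Nonempty)
    (h12 : A₁ ≠ A₂) (h13 : A₁ ≠ A₃) (h23 : A₂ ≠ A₃) :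
    Module.finrank ℚ
        ↥(LinearMap.ker (alphaForm n A₁) ⊓ LinearMap.ker (alphaForm n A₂) ⊓
          LinearMap.ker (alphaForm n A₃)) = n - 2 ↔
      (Disjoint A₁ A₂ ∧ A₁ ∪ A₂ = A₃) ∨
      (Disjoint A₁ A₃ ∧ A₁ ∪ A₃ = A₂) ∨
      (Disjoint A₂ A₃ ∧ A₂ ∪ A₃ = A₁) := by
  constructor
  · -- forward direction
    intro hrank
    set L := (alphaForm n A₁).prod ((alphaForm n A₂).prod (alphaForm n A₃)) with hL
    have hker : LinearMap.ker L
        = LinearMap.ker (alphaForm n A₁) ⊓ LinearMap.ker (alphaForm n A₂) ⊓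
          LinearMap.ker (alphaForm n A₃) := by
      rw [hL, LinearMap.ker_prod, LinearMap.ker_prod, inf_assoc]
    have hrn := LinearMap.finrank_range_add_finrank_ker L
    have hnn : Module.finrank ℚ (Fin n → ℚ) = n := by
      simp [Module.finrank_pi]
    have h3' : Module.finrank ℚ (ℚ × ℚ × ℚ) = 3 := by
      simp [Module.finrank_prod]
    rw [hker, hrank, hnn] at hrn
    have hlt : LinearMap.range L < ⊤ := by
      rw [lt_top_iff_ne_top]
      intro he
      rw [he, finrank_top, h3'] at hrn
      omega
    obtain ⟨φ, hφ0, hφ⟩ := Submodule.exists_dual_map_eq_bot_of_lt_top hlt inferInstance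
    have hann : ∀ x, φ (L x) = 0 := by
      intro x
      have hmem : φ (L x) ∈ Submodule.map φ (LinearMap.range L) :=
        Submodule.mem_map_of_mem (LinearMap.mem_range_self L x)
      rw [hφ] at hmem
      simpa using hmem
    set c₁ := φ (1, 0, 0) with hc₁
    set c₂ := φ (0, 1, 0) with hc₂
    set c₃ := φ (0, 0, 1) with hc₃
    have hdec : ∀ v : ℚ × ℚ × ℚ, φ v = v.1 * c₁ + v.2.1 * c₂ + v.2.2 * c₃ := by
      intro v
      have hv : v = v.1 • ((1:ℚ), (0:ℚ), (0:ℚ)) + v.2.1 • ((0:ℚ), (1:ℚ), (0:ℚ))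
          + v.2.2 • ((0:ℚ), (0:ℚ), (1:ℚ)) := by
        refine Prod.ext ?_ (Prod.ext ?_ ?_) <;> simp
      calc φ v = φ (v.1 • ((1:ℚ), (0:ℚ), (0:ℚ)) + v.2.1 • ((0:ℚ), (1:ℚ), (0:ℚ))
          + v.2.2 • ((0:ℚ), (0:ℚ), (1:ℚ))) := by rw [← hv]
        _ = v.1 * c₁ + v.2.1 * c₂ + v.2.2 * c₃ := by
          rw [map_add, map_add, map_smul, map_smul, map_smul, smul_eq_mul, smul_eq_mul,
            smul_eq_mul]
    have hc : ¬(c₁ = 0 ∧ c₂ = 0 ∧ c₃ = 0) := by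
      rintro ⟨e1, e2, e3⟩
      apply hφ0
      apply LinearMap.ext
      intro v
      rw [hdec v, e1, e2, e3]
      simp
    have key : ∀ i, c₁ * (if i ∈ A₁ then (1:ℚ) else 0) + c₂ * (if i ∈ A₂ then 1 else 0)
        + c₃ * (if i ∈ A₃ then 1 else 0) = 0 := by
      intro i
      have h := hann (Pi.single i 1)
      simp only [hL, LinearMap.prod_apply, Function.prod, hdec, alphaForm_single] at h
      linarith [h]
    exact combo A₁ A₂ A₃ h1 h2 h3 h12 h13 h23 c₁ c₂ c₃ hc key
  · -- reverse direction
    rintro (⟨hd, hu⟩ | ⟨hd, hu⟩ | ⟨hd, hu⟩)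
    · have hsum : alphaForm n A₃ = alphaForm n A₁ + alphaForm n A₂ := by
        rw [← hu, alphaForm_union n hd]
      have hker : LinearMap.ker (alphaForm n A₁) ⊓ LinearMap.ker (alphaForm n A₂) ⊓
          LinearMap.ker (alphaForm n A₃)
          = LinearMap.ker (alphaForm n A₁) ⊓ LinearMap.ker (alphaForm n A₂) := by
        ext x
        simp only [Submodule.mem_inf, LinearMap.mem_ker, hsum, LinearMap.add_apply]
        constructor
        · rintro ⟨⟨ha, hb⟩, _⟩; exact ⟨ha, hb⟩
        · rintro ⟨ha, hb⟩; exact ⟨⟨ha, hb⟩, by rw [ha, hb]; ring⟩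
      rw [hker]
      exact finrank_ker_inf_two n A₁ A₂ h1 h2 hd
    · have hsum : alphaForm n A₂ = alphaForm n A₁ + alphaForm n A₃ := by
        rw [← hu, alphaForm_union n hd]
      have hker : LinearMap.ker (alphaForm n A₁) ⊓ LinearMap.ker (alphaForm n A₂) ⊓
          LinearMap.ker (alphaForm n A₃)
          = LinearMap.ker (alphaForm n A₁) ⊓ LinearMap.ker (alphaForm n A₃) := by
        ext x
        simp only [Submodule.mem_inf, LinearMap.mem_ker, hsum, LinearMap.add_apply]
        constructor
        · rintro ⟨⟨ha, _⟩, hb⟩; exact ⟨ha, hb⟩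
        · rintro ⟨ha, hb⟩; exact ⟨⟨ha, by rw [ha, hb]; ring⟩, hb⟩
      rw [hker]
      exact finrank_ker_inf_two n A₁ A₃ h1 h3 hd
    · have hsum : alphaForm n A₁ = alphaForm n A₂ + alphaForm n A₃ := by
        rw [← hu, alphaForm_union n hd]
      have hker : LinearMap.ker (alphaForm n A₁) ⊓ LinearMap.ker (alphaForm n A₂) ⊓
          LinearMap.ker (alphaForm n A₃)
          = LinearMap.ker (alphaForm n A₂) ⊓ LinearMap.ker (alphaForm n A₃) := by
        ext x
        simp only [Submodule.mem_inf, LinearMap.mem_ker, hsum, LinearMap.add_apply]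
        constructor
        · rintro ⟨⟨_, ha⟩, hb⟩; exact ⟨ha, hb⟩
        · rintro ⟨ha, hb⟩; exact ⟨⟨by rw [ha, hb]; ring, ha⟩, hb⟩
      rw [hker]
      exact finrank_ker_inf_two n A₂ A₃ h2 h3 hd
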